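/- arXiv:2305.16508 — 3 statements merged into one kernel-verified Lean document; each statement's English description precedes it below -/
import Mathlib

section
/- For every n ≥ 0 and all x ∈ ℝ, the normalized Hermite polynomial satisfies |h_n(x)| ≤ 2^{n/2} · max(1, |x|^n). -/
open MeasureTheory ProbabilityTheory

/-- The normalized (probabilists') Hermite polynomials, orthonormal w.r.t. N(0,1). -/
noncomputable def hermiteN : ℕ → ℝ → ℝ
  | 0 => fun _ => 1
  | 1 => fun x => x
  | n + 2 => fun x => x / Real.sqrt (n + 2) * hermiteN (n + 1) x
      - Real.sqrt ((n + 1) / (n + 2)) * hermiteN n x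

/-- The standard Gaussian measure on ℝ. -/
noncomputable def gaussMeasure : Measure ℝ := gaussianReal 0 1

lemma hermite_bound_aux (x : ℝ) :
    ∀ n : ℕ, |hermiteN n x| ≤ (2 : ℝ) ^ ((n : ℝ) / 2) * (max 1 |x|) ^ n := by
  set M : ℝ := max 1 |x| with hMdef
  have hM1 : (1 : ℝ) ≤ M := le_max_left _ _
  have hxM : |x| ≤ M := le_max_right _ _
  have hM0 : (0 : ℝ) ≤ M := by linarith
  intro n
  induction n using Nat.twoStepInduction with
  | zero => simp [hermiteN]
  | one =>
      simp only [hermiteN, Nat.cast_one, pow_one]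
      calc |x| ≤ M := hxM
        _ = 1 * M := (one_mul M).symm
        _ ≤ (2:ℝ) ^ ((1:ℝ)/2) * M := by
            gcongr
            exact Real.one_le_rpow (by norm_num) (by norm_num)
  | more n ih ih1 =>
      have hs2 : Real.sqrt 2 ≤ Real.sqrt ((n:ℝ) + 2) := by
        apply Real.sqrt_le_sqrt; push_cast; linarith
      have hs0 : (0:ℝ) < Real.sqrt ((n:ℝ) + 2) := by positivity
      have hsqrt2 : (0:ℝ) < Real.sqrt 2 := by positivity
      have habs : |hermiteN (n + 2) x| ≤
          |x| / Real.sqrt ((n:ℝ) + 2) * |hermiteN (n + 1) x|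
            + Real.sqrt (((n:ℝ) + 1) / ((n:ℝ) + 2)) * |hermiteN n x| := by
        show |x / Real.sqrt ((n:ℝ) + 2) * hermiteN (n + 1) x
            - Real.sqrt (((n:ℝ)+1) / ((n:ℝ)+2)) * hermiteN n x| ≤ _
        refine (abs_sub _ _).trans ?_
        rw [abs_mul, abs_mul, abs_div, abs_of_pos hs0,
          abs_of_nonneg (Real.sqrt_nonneg _)]
      have hc1 : |x| / Real.sqrt ((n:ℝ) + 2) ≤ M / Real.sqrt 2 := by
        gcongr
      have hc2 : Real.sqrt (((n:ℝ) + 1) / ((n:ℝ) + 2)) ≤ 1 := by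
        refine (Real.sqrt_le_sqrt ?_).trans_eq Real.sqrt_one
        rw [div_le_one (by positivity)]; linarith
      have key1 : M / Real.sqrt 2 * ((2:ℝ) ^ (((n:ℝ)+1) / 2) * M ^ (n+1))
          = (2:ℝ) ^ ((n:ℝ) / 2) * M ^ (n+2) := by
        have h2 : (2:ℝ) ^ (((n:ℝ)+1)/2) = 2 ^ ((n:ℝ)/2) * Real.sqrt 2 := by
          rw [Real.sqrt_eq_rpow, ← Real.rpow_add (by norm_num : (0:ℝ) < 2)]
          norm_num
          congr 1
          ring
        rw [h2, pow_succ, pow_succ]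
        field_simp
        ring
      calc |hermiteN (n + 2) x| ≤ _ := habs
        _ ≤ M / Real.sqrt 2 * ((2:ℝ) ^ (((n:ℝ)+1) / 2) * M ^ (n+1))
              + 1 * ((2:ℝ) ^ ((n:ℝ) / 2) * M ^ n) := by
            push_cast at ih1
            exact add_le_add
              (mul_le_mul hc1 ih1 (abs_nonneg _) (by positivity))
              (mul_le_mul hc2 ih (abs_nonneg _) zero_le_one)
        _ = (2:ℝ) ^ ((n:ℝ)/2) * M ^ (n+2) + (2:ℝ) ^ ((n:ℝ)/2) * M ^ n := by
            rw [key1, one_mul]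
        _ ≤ (2:ℝ) ^ ((n:ℝ)/2) * M ^ (n+2) + (2:ℝ) ^ ((n:ℝ)/2) * M ^ (n+2) := by
            have : M ^ n ≤ M ^ (n + 2) := pow_le_pow_right₀ hM1 (Nat.le_add_right n 2)
            have h20 : (0:ℝ) ≤ (2:ℝ) ^ ((n:ℝ)/2) := by positivity
            exact add_le_add le_rfl (mul_le_mul_of_nonneg_left this h20)
        _ = 2 * ((2:ℝ) ^ ((n:ℝ)/2) * M ^ (n+2)) := by ring
        _ = (2:ℝ) ^ (((n:ℕ)+2 : ℝ)/2) * M ^ (n+2) := by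
            rw [show (((n:ℕ)+2:ℝ))/2 = (n:ℝ)/2 + 1 by push_cast; ring,
              Real.rpow_add (by norm_num), Real.rpow_one]
            ring
        _ = (2:ℝ) ^ ((((n+2:ℕ)):ℝ)/2) * M ^ (n+2) := by push_cast; ring_nf

/-- Pointwise bound on normalized Hermite polynomials. -/
theorem hermite_bound (n : ℕ) (x : ℝ) :
    |hermiteN n x| ≤ (2 : ℝ) ^ ((n : ℝ) / 2) * max 1 (|x| ^ n) := by
  have h := hermite_bound_aux x n
  have : (max 1 |x|) ^ n = max 1 (|x| ^ n) := by
    rcases le_total 1 |x| with h1 | h1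
    · rw [max_eq_right h1, max_eq_right (one_le_pow₀ h1)]
    · rw [max_eq_left h1, one_pow,
        max_eq_left (pow_le_one₀ (abs_nonneg x) h1)]
  rwa [this] at h
end

section
/- For every n ≥ 0 and all x, y ∈ ℝ, |h_n(x) − h_n(x+y)| ≤ 2^n · max(|x|, |x+y|, 1)^n · |y|, where h_n is the n-th normalized Hermite polynomial. -/
open MeasureTheory ProbabilityTheory

lemma sqrt_frac_le_one (n : ℕ) : Real.sqrt (((n:ℝ) + 1) / ((n:ℝ) + 2)) ≤ 1 := by
  have hn0 : (0:ℝ) ≤ (n:ℝ) := Nat.cast_nonneg n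
  have h : ((n:ℝ) + 1) / ((n:ℝ) + 2) ≤ 1 := by
    rw [div_le_one (by linarith)]; linarith
  calc Real.sqrt (((n:ℝ) + 1) / ((n:ℝ) + 2)) ≤ Real.sqrt 1 := Real.sqrt_le_sqrt h
    _ = 1 := Real.sqrt_one

lemma hermiteN_bound (M : ℝ) (hM : 1 ≤ M) (z : ℝ) (hz : |z| ≤ M) :
    ∀ n, |hermiteN n z| ≤ (Real.sqrt 2 * M) ^ n := by
  have hM0 : (0:ℝ) < M := lt_of_lt_of_le one_pos hM
  have hs2 : Real.sqrt 2 ^ 2 = 2 := Real.sq_sqrt (by norm_num)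
  have hs2pos : (0:ℝ) < Real.sqrt 2 := Real.sqrt_pos.mpr (by norm_num)
  have hs21 : (1:ℝ) ≤ Real.sqrt 2 := by nlinarith
  intro n
  induction n using Nat.twoStepInduction with
  | zero => simp [hermiteN]
  | one =>
    simpa [hermiteN] using hz.trans (by nlinarith)
  | more n ih1 ih2 =>
    have hn0 : (0:ℝ) ≤ (n:ℝ) := Nat.cast_nonneg n
    have hsn2 : Real.sqrt 2 ≤ Real.sqrt ((n:ℝ) + 2) :=
      Real.sqrt_le_sqrt (by linarith)
    have hsnpos : (0:ℝ) < Real.sqrt ((n:ℝ) + 2) := lt_of_lt_of_le hs2pos hsn2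
    have hsr : Real.sqrt (((n:ℝ) + 1) / ((n:ℝ) + 2)) ≤ 1 := sqrt_frac_le_one n
    have hsr0 : 0 ≤ Real.sqrt (((n:ℝ) + 1) / ((n:ℝ) + 2)) := Real.sqrt_nonneg _
    set A := (Real.sqrt 2 * M) ^ n with hA
    have hA0 : 0 ≤ A := by positivity
    have hzdiv : |z / Real.sqrt ((n:ℝ) + 2)| ≤ M / Real.sqrt 2 := by
      rw [abs_div, abs_of_pos hsnpos]
      exact div_le_div₀ hM0.le hz hs2pos hsn2
    have e : hermiteN (n+2) z = z / Real.sqrt ((n:ℝ) + 2) * hermiteN (n+1) z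
        - Real.sqrt (((n:ℝ)+1) / ((n:ℝ)+2)) * hermiteN n z := rfl
    rw [e]
    have h2 : (Real.sqrt 2 * M) ^ 2 = 2 * M ^ 2 := by rw [mul_pow, hs2]
    have hpow : (Real.sqrt 2 * M) ^ (n+2) = A * (2 * M^2) := by
      rw [hA, pow_add, h2]
    calc |z / Real.sqrt ((n:ℝ) + 2) * hermiteN (n+1) z
        - Real.sqrt (((n:ℝ)+1) / ((n:ℝ)+2)) * hermiteN n z|
        ≤ |z / Real.sqrt ((n:ℝ) + 2)| * |hermiteN (n+1) z|
          + |Real.sqrt (((n:ℝ)+1) / ((n:ℝ)+2))| * |hermiteN n z| := by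
          rw [← abs_mul, ← abs_mul]; exact abs_sub _ _
      _ ≤ (M / Real.sqrt 2) * ((Real.sqrt 2 * M) ^ (n+1)) + 1 * A := by
          apply add_le_add
          · exact mul_le_mul hzdiv ih2 (abs_nonneg _) (by positivity)
          · exact mul_le_mul (by rwa [abs_of_nonneg hsr0]) ih1 (abs_nonneg _) one_pos.le
      _ = M^2 * A + A := by
          rw [pow_succ, hA]
          field_simp
      _ ≤ (Real.sqrt 2 * M) ^ (n+2) := by
          rw [hpow]
          nlinarith [mul_nonneg hA0 (sub_nonneg.mpr (one_le_pow₀ hM (n := 2)))]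

/-- Local Lipschitz-type bound for normalized Hermite polynomials. -/
theorem hermite_lipschitz (n : ℕ) (x y : ℝ) :
    |hermiteN n x - hermiteN n (x + y)| ≤ 2 ^ n * max (max |x| |x + y|) 1 ^ n * |y| := by
  set M := max (max |x| |x + y|) 1 with hMdef
  have hM : 1 ≤ M := le_max_right _ _
  have hM0 : (0:ℝ) < M := lt_of_lt_of_le one_pos hM
  have hx : |x| ≤ M := le_trans (le_max_left _ _) (le_max_left _ _)
  have hxy : |x + y| ≤ M := le_trans (le_max_right _ _) (le_max_left _ _)
  have hs2 : Real.sqrt 2 ^ 2 = 2 := Real.sq_sqrt (by norm_num)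
  have hs2pos : (0:ℝ) < Real.sqrt 2 := Real.sqrt_pos.mpr (by norm_num)
  have hs21 : (1:ℝ) ≤ Real.sqrt 2 := by nlinarith
  induction n using Nat.twoStepInduction with
  | zero => simp [hermiteN]
  | one =>
    simp only [hermiteN, pow_one]
    rw [show x - (x + y) = -y by ring, abs_neg]
    nlinarith [abs_nonneg y]
  | more n ih1 ih2 =>
    have hn0 : (0:ℝ) ≤ (n:ℝ) := Nat.cast_nonneg n
    have hsn2 : Real.sqrt 2 ≤ Real.sqrt ((n:ℝ) + 2) :=
      Real.sqrt_le_sqrt (by linarith)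
    have hsnpos : (0:ℝ) < Real.sqrt ((n:ℝ) + 2) := lt_of_lt_of_le hs2pos hsn2
    have hsn1 : (1:ℝ) ≤ Real.sqrt ((n:ℝ) + 2) := le_trans hs21 hsn2
    have hsr : Real.sqrt (((n:ℝ) + 1) / ((n:ℝ) + 2)) ≤ 1 := sqrt_frac_le_one n
    have hsr0 : 0 ≤ Real.sqrt (((n:ℝ) + 1) / ((n:ℝ) + 2)) := Real.sqrt_nonneg _
    have ex : hermiteN (n+2) x = x / Real.sqrt ((n:ℝ) + 2) * hermiteN (n+1) x
        - Real.sqrt (((n:ℝ)+1) / ((n:ℝ)+2)) * hermiteN n x := rfl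
    have ey : hermiteN (n+2) (x+y) = (x+y) / Real.sqrt ((n:ℝ) + 2) * hermiteN (n+1) (x+y)
        - Real.sqrt (((n:ℝ)+1) / ((n:ℝ)+2)) * hermiteN n (x+y) := rfl
    have hb : |hermiteN (n+1) (x+y)| ≤ (Real.sqrt 2 * M) ^ (n+1) :=
      hermiteN_bound M hM (x+y) hxy (n+1)
    have key : hermiteN (n+2) x - hermiteN (n+2) (x+y)
        = x / Real.sqrt ((n:ℝ) + 2) * (hermiteN (n+1) x - hermiteN (n+1) (x+y))
          - y / Real.sqrt ((n:ℝ) + 2) * hermiteN (n+1) (x+y)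
          - Real.sqrt (((n:ℝ)+1) / ((n:ℝ)+2)) * (hermiteN n x - hermiteN n (x+y)) := by
      rw [ex, ey]; field_simp; ring
    rw [key]
    have t1 : |x / Real.sqrt ((n:ℝ) + 2) * (hermiteN (n+1) x - hermiteN (n+1) (x+y))|
        ≤ M * (2 ^ (n+1) * M ^ (n+1) * |y|) := by
      rw [abs_mul, abs_div, abs_of_pos hsnpos]
      apply mul_le_mul _ ih2 (abs_nonneg _) hM0.le
      calc |x| / Real.sqrt ((n:ℝ)+2) ≤ |x| / 1 :=
            div_le_div_of_nonneg_left (abs_nonneg x) one_pos hsn1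
        _ = |x| := div_one _
        _ ≤ M := hx
    have t2 : |y / Real.sqrt ((n:ℝ) + 2) * hermiteN (n+1) (x+y)|
        ≤ (|y| / Real.sqrt 2) * (Real.sqrt 2 * M) ^ (n+1) := by
      rw [abs_mul, abs_div, abs_of_pos hsnpos]
      apply mul_le_mul _ hb (abs_nonneg _) (by positivity)
      exact div_le_div_of_nonneg_left (abs_nonneg y) hs2pos hsn2
    have t3 : |Real.sqrt (((n:ℝ)+1) / ((n:ℝ)+2)) * (hermiteN n x - hermiteN n (x+y))|
        ≤ 1 * (2 ^ n * M ^ n * |y|) := by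
      rw [abs_mul]
      exact mul_le_mul (by rwa [abs_of_nonneg hsr0]) ih1 (abs_nonneg _) one_pos.le
    have step : |x / Real.sqrt ((n:ℝ) + 2) * (hermiteN (n+1) x - hermiteN (n+1) (x+y))
          - y / Real.sqrt ((n:ℝ) + 2) * hermiteN (n+1) (x+y)
          - Real.sqrt (((n:ℝ)+1) / ((n:ℝ)+2)) * (hermiteN n x - hermiteN n (x+y))|
        ≤ M * (2 ^ (n+1) * M ^ (n+1) * |y|) + (|y| / Real.sqrt 2) * (Real.sqrt 2 * M) ^ (n+1)
          + 1 * (2 ^ n * M ^ n * |y|) := by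
      calc _ ≤ |x / Real.sqrt ((n:ℝ) + 2) * (hermiteN (n+1) x - hermiteN (n+1) (x+y))
          - y / Real.sqrt ((n:ℝ) + 2) * hermiteN (n+1) (x+y)|
          + |Real.sqrt (((n:ℝ)+1) / ((n:ℝ)+2)) * (hermiteN n x - hermiteN n (x+y))| :=
            abs_sub _ _
        _ ≤ _ := by
            have := (abs_sub (x / Real.sqrt ((n:ℝ) + 2) * (hermiteN (n+1) x - hermiteN (n+1) (x+y)))
              (y / Real.sqrt ((n:ℝ) + 2) * hermiteN (n+1) (x+y)))
            linarith
    refine step.trans ?_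
    have hsimp : (|y| / Real.sqrt 2) * (Real.sqrt 2 * M) ^ (n+1)
        = |y| * ((Real.sqrt 2)^n * M^(n+1)) := by
      rw [pow_succ, mul_pow]
      field_simp
      ring
    have hs2n : (Real.sqrt 2) ^ n ≤ 2 ^ n := pow_le_pow_left₀ hs2pos.le (by nlinarith) n
    have hMn1 : M ^ (n+1) ≤ M ^ (n+2) := pow_le_pow_right₀ hM (by omega)
    have hMn2 : M ^ n ≤ M ^ (n+2) := pow_le_pow_right₀ hM (by omega)
    rw [hsimp]
    have e1 : M * (2 ^ (n+1) * M ^ (n+1) * |y|) = 2 ^ (n+1) * M ^ (n+2) * |y| := by ring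
    have e2 : |y| * ((Real.sqrt 2)^n * M^(n+1)) ≤ 2 ^ n * M ^ (n+2) * |y| := by
      rw [mul_comm]
      apply mul_le_mul_of_nonneg_right _ (abs_nonneg y)
      exact mul_le_mul hs2n hMn1 (by positivity) (by positivity)
    have e3 : 1 * (2 ^ n * M ^ n * |y|) ≤ 2 ^ n * M ^ (n+2) * |y| := by
      rw [one_mul]
      apply mul_le_mul_of_nonneg_right _ (abs_nonneg y)
      exact mul_le_mul_of_nonneg_left hMn2 (by positivity)
    have expand : (2:ℝ) ^ (n+2) * M ^ (n+2) * |y|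
        = 2 ^ (n+1) * M ^ (n+2) * |y| + 2 ^ n * M ^ (n+2) * |y| + 2 ^ n * M ^ (n+2) * |y| := by
      ring
    linarith [e1, e2, e3]
end

section
/- Let (X,Y) be a centered bivariate Gaussian with unit variances and correlation ρ. Then E[h_i(X) h_j(Y)] = δ_{ij} ρ^i for all i, j ≥ 0, where h_i are the normalized Hermite polynomials. -/
open MeasureTheory ProbabilityTheory
open Polynomial Filter
open scoped NNReal ENNReal

noncomputable def HN : ℕ → Polynomial ℝ
  | 0 => 1
  | 1 => X
  | n + 2 => C (Real.sqrt (n + 2))⁻¹ * (X * HN (n + 1))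
      - C (Real.sqrt ((n + 1) / (n + 2))) * HN n

lemma HN_eval : ∀ (n : ℕ) (x : ℝ), (HN n).eval x = hermiteN n x
  | 0, x => by simp [HN, hermiteN]
  | 1, x => by simp [HN, hermiteN]
  | n + 2, x => by
      simp only [HN, hermiteN, eval_sub, eval_mul, eval_C, eval_X,
        HN_eval (n+1), HN_eval n]
      ring

lemma sqrt_div_eq (n : ℕ) :
    Real.sqrt ((n + 1 : ℝ) / (n + 2)) = Real.sqrt (n + 1) * (Real.sqrt (n + 2))⁻¹ := by
  rw [Real.sqrt_div (by positivity), div_eq_mul_inv]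

lemma HN_def2 (n : ℕ) : HN (n + 2) = C (Real.sqrt (n + 2))⁻¹ * (X * HN (n + 1))
      - C (Real.sqrt ((n + 1 : ℝ) / (n + 2))) * HN n := by
  rfl

lemma X_mul_HN (n : ℕ) :
    X * HN (n + 1) = C (Real.sqrt (n + 2)) * HN (n + 2) + C (Real.sqrt (n + 1)) * HN n := by
  have h2 : Real.sqrt (n + 2) ≠ 0 := by positivity
  rw [HN_def2, sqrt_div_eq]
  rw [mul_sub, ← mul_assoc, ← C_mul, mul_inv_cancel₀ h2, C_1, one_mul]
  rw [← mul_assoc, ← C_mul]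
  rw [show Real.sqrt (n+2) * (Real.sqrt (n+1) * (Real.sqrt (n+2))⁻¹) = Real.sqrt (n+1) by
    field_simp]
  ring

lemma HN_deriv : ∀ n : ℕ, (HN (n + 1)).derivative = C (Real.sqrt (n + 1)) * HN n
  | 0 => by
      show (X : Polynomial ℝ).derivative = _
      simp [HN]
  | 1 => by
      rw [show ((1:ℕ)+1) = 0 + 2 from rfl, HN_def2]
      rw [derivative_sub, derivative_mul, derivative_C, derivative_mul, derivative_X]
      rw [show HN (0+1) = (X : Polynomial ℝ) from rfl, derivative_X, derivative_mul,
        show (HN 0 : Polynomial ℝ) = 1 from rfl, derivative_one, derivative_C]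
      simp only [mul_one, one_mul, mul_zero, zero_mul, zero_add, add_zero, sub_zero]
      have hA : C (Real.sqrt (2:ℝ)) * C (Real.sqrt 2) = 2 := by
        rw [← C_mul, Real.mul_self_sqrt (by norm_num : (0:ℝ) ≤ 2)]
        exact map_ofNat C 2
      have hB : C (Real.sqrt (2:ℝ)) * C ((Real.sqrt 2)⁻¹) = 1 := by
        rw [← C_mul, mul_inv_cancel₀ (by positivity : Real.sqrt (2:ℝ) ≠ 0), C_1]
      push_cast
      norm_num
      linear_combination (-(C (Real.sqrt (2:ℝ))⁻¹ * X)) * hA + (C (Real.sqrt (2:ℝ)) * X) * hB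
  | n + 2 => by
      have IH1 := HN_deriv (n + 1)
      have IH0 := HN_deriv n
      have key := X_mul_HN n
      rw [show n + 2 + 1 = (n + 1) + 2 from rfl, HN_def2]
      rw [derivative_sub, derivative_mul, derivative_C, derivative_mul, derivative_X, zero_mul,
        zero_add, derivative_mul, derivative_C, zero_mul, zero_add, one_mul, IH1, IH0,
        sqrt_div_eq, C_mul]
      push_cast
      have hc : ((n:ℝ) + 1 + 2) = (n:ℝ) + 3 := by ring
      have hc2 : ((n:ℝ) + 1 + 1) = (n:ℝ) + 2 := by ring
      have hc3 : ((n:ℝ) + 2 + 1) = (n:ℝ) + 3 := by ring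
      rw [hc, hc2, hc3, show n + 1 + 1 = n + 2 from rfl]
      have expand : X * (C (Real.sqrt ((n:ℝ) + 2)) * HN (n + 1))
          = C (Real.sqrt ((n:ℝ)+2)) * (C (Real.sqrt ((n:ℝ) + 2)) * HN (n + 2)
              + C (Real.sqrt ((n:ℝ) + 1)) * HN n) := by
        rw [← key]; ring
      rw [expand]
      have hA : C (Real.sqrt ((n:ℝ)+2)) * C (Real.sqrt ((n:ℝ)+2)) = C ((n:ℝ)+2) := by
        rw [← C_mul, Real.mul_self_sqrt (by positivity)]
      have hsum : (1 : Polynomial ℝ) + C ((n:ℝ)+2) = C ((n:ℝ)+3) := by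
        rw [← C_1, ← C_add]; congr 1; ring
      have hA3 : C (Real.sqrt ((n:ℝ)+3)) * C (Real.sqrt ((n:ℝ)+3)) = C ((n:ℝ)+3) := by
        rw [← C_mul, Real.mul_self_sqrt (by positivity)]
      have hB : C (Real.sqrt ((n:ℝ)+3)) * C ((Real.sqrt ((n:ℝ)+3))⁻¹) = 1 := by
        rw [← C_mul, mul_inv_cancel₀ (by positivity : Real.sqrt ((n:ℝ)+3) ≠ 0), C_1]
      linear_combination (C ((Real.sqrt ((n:ℝ)+3))⁻¹) * HN (n+2)) * hA
        + (C ((Real.sqrt ((n:ℝ)+3))⁻¹) * HN (n+2)) * hsum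
        - (C ((Real.sqrt ((n:ℝ)+3))⁻¹) * HN (n+2)) * hA3
        + (C (Real.sqrt ((n:ℝ)+3)) * HN (n+2)) * hB

lemma gaussPDF_eq (x : ℝ) : gaussianPDFReal 0 1 x
    = (Real.sqrt (2*Real.pi))⁻¹ * Real.exp (-(1/2) * x^2) := by
  simp only [gaussianPDFReal, NNReal.coe_one, mul_one, sub_zero]
  ring_nf

lemma integrable_pow_gauss (k : ℕ) :
    Integrable (fun x : ℝ => x ^ k * Real.exp (-(1/2) * x^2)) := by
  have h := integrable_rpow_mul_exp_neg_mul_sq (b := 1/2) (by norm_num)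
    (s := (k:ℝ)) (by exact_mod_cast neg_one_lt_zero.trans_le (Nat.cast_nonneg k))
  simpa [Real.rpow_natCast] using h

lemma poly_gauss_expand (P : Polynomial ℝ) (c : ℝ) :
    (fun x : ℝ => P.eval x * (c * Real.exp (-(1/2) * x^2)))
      = fun x => ∑ k ∈ Finset.range (P.natDegree + 1),
          (P.coeff k * c) * (x ^ k * Real.exp (-(1/2) * x^2)) := by
  funext x
  rw [Polynomial.eval_eq_sum_range, Finset.sum_mul]
  exact Finset.sum_congr rfl fun k _ => by ring

lemma integrable_poly_gauss (P : Polynomial ℝ) (c : ℝ) :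
    Integrable (fun x : ℝ => P.eval x * (c * Real.exp (-(1/2) * x^2))) := by
  rw [poly_gauss_expand]
  exact integrable_finset_sum _ fun k _ => (integrable_pow_gauss k).const_mul _

lemma tendsto_pow_gauss (k : ℕ) :
    Tendsto (fun x : ℝ => x ^ k * Real.exp (-(1/2) * x^2)) atTop (nhds 0) := by
  have h := rpow_mul_exp_neg_mul_sq_isLittleO_exp_neg (by norm_num : (0:ℝ) < 1/2) (k:ℝ)
  have h2 : Tendsto (fun x : ℝ => Real.exp (-(1/2) * x)) atTop (nhds 0) := by
    have hm : Tendsto (fun x : ℝ => (1/2) * x) atTop atTop :=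
      Tendsto.const_mul_atTop (by norm_num) tendsto_id
    have := Real.tendsto_exp_neg_atTop_nhds_zero.comp hm
    convert this using 2 with x
    simp [Function.comp]
  have := h.trans_tendsto h2
  simpa [Real.rpow_natCast] using this

lemma tendsto_poly_gauss_top (P : Polynomial ℝ) (c : ℝ) :
    Tendsto (fun x : ℝ => P.eval x * (c * Real.exp (-(1/2) * x^2))) atTop (nhds 0) := by
  rw [poly_gauss_expand]
  have : Tendsto (fun x : ℝ => ∑ k ∈ Finset.range (P.natDegree + 1),
      (P.coeff k * c) * (x ^ k * Real.exp (-(1/2) * x^2))) atTop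
      (nhds (∑ k ∈ Finset.range (P.natDegree + 1), (0:ℝ))) := by
    refine tendsto_finset_sum _ fun k _ => ?_
    simpa using (tendsto_pow_gauss k).const_mul (P.coeff k * c)
  simpa using this

lemma tendsto_poly_gauss_bot (P : Polynomial ℝ) (c : ℝ) :
    Tendsto (fun x : ℝ => P.eval x * (c * Real.exp (-(1/2) * x^2))) atBot (nhds 0) := by
  have h := (tendsto_poly_gauss_top (P.comp (-X)) c).comp tendsto_neg_atBot_atTop
  convert h using 2 with x
  simp [Function.comp, eval_comp]

lemma gaussMeasure_eq : gaussMeasure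
    = volume.withDensity (fun x => ((Real.toNNReal (gaussianPDFReal 0 1 x) : ℝ≥0) : ℝ≥0∞)) := by
  rw [gaussMeasure, gaussianReal_of_var_ne_zero 0 one_ne_zero]
  rfl

lemma integral_gaussMeasure (f : ℝ → ℝ) :
    ∫ x, f x ∂gaussMeasure = ∫ x, f x * gaussianPDFReal 0 1 x := by
  rw [gaussMeasure_eq,
    integral_withDensity_eq_integral_smul ((measurable_gaussianPDFReal 0 1).real_toNNReal) f]
  congr 1
  funext x
  rw [NNReal.smul_def, smul_eq_mul, Real.coe_toNNReal _ (gaussianPDFReal_nonneg 0 1 x), mul_comm]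

lemma integrable_poly_gaussMeasure (P : Polynomial ℝ) :
    Integrable (fun x => P.eval x) gaussMeasure := by
  rw [gaussMeasure_eq, integrable_withDensity_iff
    ((measurable_gaussianPDFReal 0 1).real_toNNReal.coe_nnreal_ennreal)
    (Eventually.of_forall fun x => ENNReal.coe_lt_top)]
  have : (fun x => P.eval x * ((Real.toNNReal (gaussianPDFReal 0 1 x) : ℝ≥0) : ℝ≥0∞).toReal)
      = fun x : ℝ => P.eval x * ((Real.sqrt (2*Real.pi))⁻¹ * Real.exp (-(1/2) * x^2)) := by
    funext x
    rw [ENNReal.coe_toReal, Real.coe_toNNReal _ (gaussianPDFReal_nonneg 0 1 x), gaussPDF_eq]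
  rw [this]
  exact integrable_poly_gauss P _

instance : IsProbabilityMeasure gaussMeasure := by
  rw [gaussMeasure]; infer_instance

lemma gauss_ibp (P : Polynomial ℝ) :
    ∫ x, x * P.eval x ∂gaussMeasure = ∫ x, P.derivative.eval x ∂gaussMeasure := by
  rw [integral_gaussMeasure, integral_gaussMeasure]
  set c := (Real.sqrt (2*Real.pi))⁻¹ with hc
  have hpdf : ∀ x : ℝ, gaussianPDFReal 0 1 x = c * Real.exp (-(1/2) * x^2) := gaussPDF_eq
  simp only [hpdf]
  have key : ∫ x : ℝ, (P.derivative.eval x - x * P.eval x) * (c * Real.exp (-(1/2) * x^2)) = 0 := by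
    have hder : ∀ x : ℝ, HasDerivAt (fun y => P.eval y * (c * Real.exp (-(1/2) * y^2)))
        ((P.derivative.eval x - x * P.eval x) * (c * Real.exp (-(1/2) * x^2))) x := by
      intro x
      have h1 : HasDerivAt (fun y : ℝ => P.eval y) (P.derivative.eval x) x := P.hasDerivAt x
      have h2 : HasDerivAt (fun y : ℝ => -(1/2) * y^2) (-(1/2) * (2*x)) x := by
        simpa using (hasDerivAt_pow 2 x).const_mul (-(1/2) : ℝ)
      have h3 := (h2.exp).const_mul c
      have h4 := h1.fun_mul h3
      refine h4.congr_deriv ?_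
      ring
    have hint : Integrable (fun x : ℝ =>
        (P.derivative.eval x - x * P.eval x) * (c * Real.exp (-(1/2) * x^2))) := by
      have h := integrable_poly_gauss (P.derivative - X * P) c
      simpa using h
    have := integral_of_hasDerivAt_of_tendsto hder hint
      (tendsto_poly_gauss_bot P c) (tendsto_poly_gauss_top P c)
    simpa using this
  have h1 := integrable_poly_gauss P.derivative c
  have h2 : Integrable (fun x : ℝ => x * P.eval x * (c * Real.exp (-(1/2) * x^2))) := by
    have h := integrable_poly_gauss (X * P) c
    simpa using h
  have hsub : ∫ x : ℝ, (P.derivative.eval x - x * P.eval x) * (c * Real.exp (-(1/2) * x^2))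
      = (∫ x : ℝ, P.derivative.eval x * (c * Real.exp (-(1/2) * x^2)))
        - ∫ x : ℝ, x * P.eval x * (c * Real.exp (-(1/2) * x^2)) := by
    rw [← integral_sub h1 h2]
    congr 1; funext x; ring
  rw [hsub] at key
  linarith [key]

lemma integral_const_gauss (r : ℝ) : ∫ _x : ℝ, r ∂gaussMeasure = r := by
  simp [measure_univ]

lemma integral_id_gauss : ∫ z, z ∂gaussMeasure = 0 := by
  have h := gauss_ibp (1 : Polynomial ℝ)
  simpa [integral_const_gauss] using h

lemma integrable_fun_gauss (P : Polynomial ℝ) (f : ℝ → ℝ) (hf : ∀ x, f x = P.eval x) :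
    Integrable f gaussMeasure := by
  have : f = fun x => P.eval x := funext hf
  rw [this]
  exact integrable_poly_gaussMeasure P

lemma integral_HN_shift (ρ s : ℝ) (hs : ρ^2 + s^2 = 1) :
    ∀ (n : ℕ) (x : ℝ), ∫ z, (HN n).eval (ρ*x + s*z) ∂gaussMeasure = ρ^n * (HN n).eval x
  | 0, x => by
      simp only [show (HN 0 : Polynomial ℝ) = 1 from rfl, eval_one, pow_zero, mul_one]
      exact integral_const_gauss 1
  | 1, x => by
      simp only [show (HN 1 : Polynomial ℝ) = X from rfl, eval_X, pow_one]
      have ha : Integrable (fun _z : ℝ => ρ*x) gaussMeasure := integrable_const _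
      have hb : Integrable (fun z : ℝ => s*z) gaussMeasure :=
        integrable_fun_gauss (C s * X) _ (fun z => by simp)
      rw [integral_add ha hb]
      have h2 : ∫ z : ℝ, s * z ∂gaussMeasure = s * ∫ z, z ∂gaussMeasure :=
        integral_const_mul s _
      rw [h2, integral_id_gauss, integral_const_gauss]
      ring
  | n + 2, x => by
      have IH1 := integral_HN_shift ρ s hs (n+1) x
      have IH0 := integral_HN_shift ρ s hs n x
      set a := ρ * x with ha
      set Q1 : Polynomial ℝ := (HN (n+1)).comp (C a + C s * X) with hQ1
      set Q0 : Polynomial ℝ := (HN n).comp (C a + C s * X) with hQ0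
      have hQ1e : ∀ z, Q1.eval z = (HN (n+1)).eval (a + s*z) := by
        intro z; simp [hQ1, eval_comp]
      have hQ0e : ∀ z, Q0.eval z = (HN n).eval (a + s*z) := by
        intro z; simp [hQ0, eval_comp]
      have hQd : Q1.derivative = C (s * Real.sqrt (n+1)) * Q0 := by
        rw [hQ1, hQ0, derivative_comp, HN_deriv n]
        have h1 : (C a + C s * X : Polynomial ℝ).derivative = C s := by
          rw [derivative_add, derivative_C, derivative_mul, derivative_C, derivative_X,
            mul_one, zero_add, zero_mul, zero_add]
        rw [h1, mul_comp, C_comp,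
          show C (s * Real.sqrt ((n:ℝ)+1)) = C s * C (Real.sqrt ((n:ℝ)+1)) from C_mul]
        ring
      have EZ : ∫ z, z * (HN (n+1)).eval (a + s*z) ∂gaussMeasure
          = s * Real.sqrt (n+1) * (ρ^n * (HN n).eval x) := by
        calc ∫ z, z * (HN (n+1)).eval (a + s*z) ∂gaussMeasure
            = ∫ z, z * Q1.eval z ∂gaussMeasure := by
              congr 1; funext z; rw [hQ1e]
          _ = ∫ z, Q1.derivative.eval z ∂gaussMeasure := gauss_ibp Q1
          _ = ∫ z, (s * Real.sqrt (n+1)) * (HN n).eval (a + s*z) ∂gaussMeasure := by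
              congr 1; funext z; rw [hQd, eval_mul, eval_C, hQ0e]
          _ = (s * Real.sqrt (n+1)) * (ρ^n * (HN n).eval x) := by
              rw [integral_const_mul, IH0]
      have Iu : Integrable (fun z => (HN (n+1)).eval (a + s*z)) gaussMeasure :=
        integrable_fun_gauss Q1 _ (fun z => (hQ1e z).symm)
      have Izu : Integrable (fun z => z * (HN (n+1)).eval (a + s*z)) gaussMeasure :=
        integrable_fun_gauss (X * Q1) _ (fun z => by rw [eval_mul, eval_X, hQ1e])
      have Iv : Integrable (fun z => (HN n).eval (a + s*z)) gaussMeasure :=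
        integrable_fun_gauss Q0 _ (fun z => (hQ0e z).symm)
      have split : (fun z => (HN (n+2)).eval (a + s*z))
          = fun z => (((Real.sqrt (n+2))⁻¹ * a) * (HN (n+1)).eval (a + s*z)
              + ((Real.sqrt (n+2))⁻¹ * s) * (z * (HN (n+1)).eval (a + s*z)))
            - (Real.sqrt ((n+1 : ℝ)/(n+2))) * (HN n).eval (a + s*z) := by
        funext z
        rw [HN_def2, eval_sub, eval_mul, eval_mul, eval_mul, eval_C, eval_C, eval_X]
        ring
      have I1 : Integrable (fun z => ((Real.sqrt (n+2))⁻¹ * a) * (HN (n+1)).eval (a + s*z))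
          gaussMeasure := Iu.const_mul _
      have I2 : Integrable (fun z => ((Real.sqrt (n+2))⁻¹ * s) * (z * (HN (n+1)).eval (a + s*z)))
          gaussMeasure := Izu.const_mul _
      have I12 : Integrable (fun z => ((Real.sqrt (n+2))⁻¹ * a) * (HN (n+1)).eval (a + s*z)
          + ((Real.sqrt (n+2))⁻¹ * s) * (z * (HN (n+1)).eval (a + s*z))) gaussMeasure := I1.add I2
      have I3 : Integrable (fun z => (Real.sqrt ((n+1 : ℝ)/(n+2))) * (HN n).eval (a + s*z))
          gaussMeasure := Iv.const_mul _
      rw [split, integral_sub I12 I3, integral_add I1 I2, integral_const_mul,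
        integral_const_mul, integral_const_mul, IH1, EZ, IH0]
      rw [HN_def2, eval_sub, eval_mul, eval_mul, eval_mul, eval_C, eval_C, eval_X, sqrt_div_eq,
        ha]
      push_cast
      linear_combination (Real.sqrt ((n:ℝ)+1) * (Real.sqrt ((n:ℝ)+2))⁻¹ * ρ^n
        * (HN n).eval x) * hs

lemma HN_deriv'' (i : ℕ) : (HN i).derivative = C (Real.sqrt i) * HN (i-1) := by
  cases i with
  | zero => simp [show (HN 0 : Polynomial ℝ) = 1 from rfl]
  | succ n =>
      rw [Nat.add_sub_cancel]
      push_cast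
      exact HN_deriv n

lemma integral_HN (i : ℕ) : ∫ x, (HN i).eval x ∂gaussMeasure = if i = 0 then 1 else 0 := by
  have h := integral_HN_shift 0 1 (by norm_num) i 0
  simp only [zero_mul, one_mul, zero_add] at h
  rw [h]
  cases i with
  | zero => simp [show (HN 0 : Polynomial ℝ) = 1 from rfl]
  | succ n => simp

lemma HN_orthonormal : ∀ (j i : ℕ),
    ∫ x, (HN i).eval x * (HN j).eval x ∂gaussMeasure = if i = j then 1 else 0
  | 0, i => by
      simp only [show (HN 0 : Polynomial ℝ) = 1 from rfl, eval_one, mul_one]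
      exact integral_HN i
  | 1, i => by
      simp only [show (HN 1 : Polynomial ℝ) = X from rfl, eval_X]
      have h : ∫ x, (HN i).eval x * x ∂gaussMeasure
          = ∫ x, x * (HN i).eval x ∂gaussMeasure := by
        congr 1; funext x; ring
      rw [h, gauss_ibp (HN i), HN_deriv'' i]
      have h2 : (fun x => (C (Real.sqrt i) * HN (i-1)).eval x)
          = fun x => Real.sqrt i * (HN (i-1)).eval x := by
        funext x; rw [eval_mul, eval_C]
      rw [h2, integral_const_mul, integral_HN]
      rcases eq_or_ne i 1 with hi | hi
      · subst hi; norm_num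
      · rcases eq_or_ne i 0 with h0 | h0
        · subst h0; norm_num
        · have h3 : i - 1 ≠ 0 := by omega
          simp [h3, hi]
  | j+2, i => by
      have G1 := HN_orthonormal (j+1) (i-1)
      have G0 := HN_orthonormal j i
      have Ii1 : Integrable (fun x => ((Real.sqrt (j+2))⁻¹)
          * (x * ((HN i).eval x * (HN (j+1)).eval x))) gaussMeasure :=
        (integrable_fun_gauss (X * (HN i * HN (j+1))) _
          (fun x => by simp only [eval_mul, eval_X])).const_mul _
      have Ii0 : Integrable (fun x => (Real.sqrt ((j+1:ℝ)/(j+2)))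
          * ((HN i).eval x * (HN j).eval x)) gaussMeasure :=
        (integrable_fun_gauss (HN i * HN j) _
          (fun x => by simp only [eval_mul])).const_mul _
      have split : (fun x => (HN i).eval x * (HN (j+2)).eval x)
          = fun x => ((Real.sqrt (j+2))⁻¹) * (x * ((HN i).eval x * (HN (j+1)).eval x))
            - (Real.sqrt ((j+1:ℝ)/(j+2))) * ((HN i).eval x * (HN j).eval x) := by
        funext x
        rw [HN_def2]
        simp only [eval_sub, eval_mul, eval_C, eval_X]
        ring
      rw [split, integral_sub Ii1 Ii0, integral_const_mul, integral_const_mul]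
      have hx : ∫ x, x * ((HN i).eval x * (HN (j+1)).eval x) ∂gaussMeasure
          = Real.sqrt i * (if i - 1 = j+1 then 1 else 0)
            + Real.sqrt (j+1) * (if i = j then 1 else 0) := by
        have h1 : (fun x : ℝ => x * ((HN i).eval x * (HN (j+1)).eval x))
            = fun x => x * (HN i * HN (j+1)).eval x := by
          funext x; rw [eval_mul]
        rw [h1, gauss_ibp, derivative_mul, HN_deriv'' i, HN_deriv j]
        have e : (fun x => (C (Real.sqrt i) * HN (i-1) * HN (j+1)
              + HN i * (C (Real.sqrt ((j:ℝ)+1)) * HN j)).eval x)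
            = fun x => Real.sqrt i * ((HN (i-1)).eval x * (HN (j+1)).eval x)
              + Real.sqrt ((j:ℝ)+1) * ((HN i).eval x * (HN j).eval x) := by
          funext x
          simp only [eval_add, eval_mul, eval_C]
          ring
        rw [e, integral_add
          ((integrable_fun_gauss (HN (i-1) * HN (j+1)) _ (fun x => by
            simp only [eval_mul])).const_mul _)
          ((integrable_fun_gauss (HN i * HN j) _ (fun x => by
            simp only [eval_mul])).const_mul _),
          integral_const_mul, integral_const_mul, G1, G0]
      rw [hx, G0, sqrt_div_eq]
      rcases eq_or_ne i (j+2) with hi | hi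
      · subst hi
        have h1 : j + 2 - 1 = j + 1 := by omega
        have hne : ¬(j + 2 = j) := by omega
        rw [h1]
        simp only [if_pos rfl, if_neg hne, mul_one, mul_zero, add_zero, sub_zero]
        push_cast
        rw [mul_one, inv_mul_cancel₀ (by positivity : Real.sqrt ((j:ℝ)+2) ≠ 0)]
      · have h2 : ¬(i - 1 = j + 1) := by omega
        rw [if_neg h2, if_neg hi]
        by_cases hij : i = j
        · simp only [if_pos hij]
          ring
        · simp only [if_neg hij]
          ring

/-- For a centered bivariate Gaussian (X,Y) with unit variances and correlation ρ,
realized as X = ξ₁, Y = ρξ₁ + √(1-ρ²)ξ₂ with ξ₁, ξ₂ independent standard Gaussians,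
E[hᵢ(X) hⱼ(Y)] = δᵢⱼ ρ^i. -/
theorem hermite_orthogonality (ρ : ℝ) (hρ : ρ ∈ Set.Icc (-1 : ℝ) 1) (i j : ℕ) :
    ∫ p : ℝ × ℝ, hermiteN i p.1 * hermiteN j (ρ * p.1 + Real.sqrt (1 - ρ ^ 2) * p.2)
        ∂(gaussMeasure.prod gaussMeasure)
      = if i = j then ρ ^ i else 0 := by
  obtain ⟨hl, hr⟩ := hρ
  set s := Real.sqrt (1 - ρ^2) with hsdef
  have hs : ρ^2 + s^2 = 1 := by
    rw [hsdef, Real.sq_sqrt (by nlinarith)]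
    ring
  have hint : Integrable (fun p : ℝ × ℝ => hermiteN i p.1 * hermiteN j (ρ*p.1 + s*p.2))
      (gaussMeasure.prod gaussMeasure) := by
    have expand : (fun p : ℝ × ℝ => hermiteN i p.1 * hermiteN j (ρ*p.1 + s*p.2))
        = fun p => ∑ m ∈ Finset.range ((HN j).natDegree+1), ∑ k ∈ Finset.range (m+1),
            (((HN j).coeff m * (m.choose k) * ρ^k) * ((HN i) * X^k).eval p.1)
              * (s^(m-k) * p.2^(m-k)) := by
      funext p
      rw [← HN_eval, ← HN_eval, Polynomial.eval_eq_sum_range (p := HN j) (ρ * p.1 + s * p.2),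
        Finset.mul_sum]
      refine Finset.sum_congr rfl fun m _ => ?_
      rw [add_pow, Finset.mul_sum, Finset.mul_sum]
      refine Finset.sum_congr rfl fun k _ => ?_
      simp only [eval_mul, eval_pow, eval_X, mul_pow]
      ring
    rw [expand]
    refine integrable_finset_sum _ fun m _ => integrable_finset_sum _ fun k _ => ?_
    exact ((integrable_poly_gaussMeasure (HN i * X^k)).const_mul _).mul_prod
      ((integrable_fun_gauss (X^(m-k)) (fun z => z^(m-k)) (fun z => by simp)).const_mul _)
  rw [MeasureTheory.integral_prod _ hint]
  have inner : ∀ x : ℝ, (∫ y, hermiteN i x * hermiteN j (ρ*x + s*y) ∂gaussMeasure)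
      = ρ^j * ((HN i).eval x * (HN j).eval x) := by
    intro x
    have e1 : (fun y => hermiteN i x * hermiteN j (ρ*x + s*y))
        = fun y => hermiteN i x * (HN j).eval (ρ*x + s*y) := by
      funext y; rw [HN_eval]
    rw [e1, integral_const_mul (hermiteN i x) (fun y => (HN j).eval (ρ*x+s*y)),
      integral_HN_shift ρ s hs j x, ← HN_eval i x]
    ring
  have outer : (∫ x, ∫ y, hermiteN i (x, y).1 * hermiteN j (ρ*(x, y).1 + s*(x, y).2)
        ∂gaussMeasure ∂gaussMeasure)
      = ∫ x, ρ^j * ((HN i).eval x * (HN j).eval x) ∂gaussMeasure := by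
    congr 1
    funext x
    exact inner x
  rw [outer, integral_const_mul (ρ^j) _]
  have horth : (∫ x, (HN i).eval x * (HN j).eval x ∂gaussMeasure)
      = if i = j then 1 else 0 := HN_orthonormal j i
  rw [horth]
  by_cases h : i = j
  · subst h; simp
  · simp [h]
end
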